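/- Every permutation f of an infinite set Ω can be written as a commutator: there exist g, h ∈ Sym(Ω) with f = g⁻¹h⁻¹gh. -/

import Mathlib

/-
  Ore's theorem: every permutation of an infinite set is a commutator.
  Proof structure:
  * `Free σ`: all orbits of σ are infinite. Free permutations with equinumerous
    orbit quotients are conjugate (via the model `CycQuot σ × ℤ`).
  * If `f = w⁻¹ * v` with `w, v` free with equinumerous orbit quotients, then
    `f` is a commutator.
  * Case A: `f` has infinitely many orbits. Then Ω splits into ℤ-many equinumerous
    f-invariant levels; take `w := shift⁻¹` and `v := shift⁻¹ * f` (level-decreasing,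
    hence free, with orbit space Y).
  * Case B: `f` has finitely many orbits. Then Ω is countable with an infinite orbit,
    so f is conjugate to a permutation of `ℤ ⊕ R` shifting ℤ and preserving R. An
    explicit height-increasing permutation `W` built from the dyadic jump map `uf`
    (with insertions of R into the chains) makes `W` and `W * F` free with countably
    infinitely many orbits.
-/

open Equiv Equiv.Perm

namespace OreComm
variable {Ω : Type*} {M : Type*} {Y : Type*}

def ν (n : ℤ) : ℕ := padicValNat 2 n.natAbs

lemma ν_pow_mul_odd (k : ℕ) (m : ℤ) (hm : Odd m) : ν (2 ^ k * m) = k := by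
  have hm0 : m ≠ 0 := by rintro rfl; rw [Int.odd_iff] at hm; omega
  have hmn : Odd m.natAbs := Int.natAbs_odd.mpr hm
  have hnd : ¬ (2 ∣ m.natAbs) := by
    intro hd; rw [Nat.odd_iff] at hmn; omega
  have habs : ((2:ℤ) ^ k * m).natAbs = 2 ^ k * m.natAbs := by
    rw [Int.natAbs_mul]
    congr 1
  unfold ν
  rw [habs, padicValNat.mul (by positivity) (by simpa using hm0), padicValNat.prime_pow,
    padicValNat.eq_zero_of_not_dvd hnd]
  omega

lemma exists_odd_decomp (n : ℤ) (hn : n ≠ 0) : ∃ m : ℤ, Odd m ∧ n = 2 ^ (ν n) * m := by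
  set a := n.natAbs with ha
  have ha0 : a ≠ 0 := by simpa [ha] using hn
  have hsplit : 2 ^ (padicValNat 2 a) * (a / 2 ^ (padicValNat 2 a)) = a := by
    rw [← Nat.factorization_def a (by norm_num)]
    exact Nat.ordProj_mul_ordCompl_eq_self a 2
  have hodd : ¬ 2 ∣ (a / 2 ^ (padicValNat 2 a)) := by
    rw [← Nat.factorization_def a (by norm_num)]
    exact Nat.not_dvd_ordCompl (by norm_num) ha0
  set c := a / 2 ^ (padicValNat 2 a) with hc
  have hoddc : Odd (c : ℤ) := by
    rw [Int.odd_coe_nat, Nat.odd_iff]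
    omega
  have hν : ν n = padicValNat 2 a := rfl
  rcases Int.natAbs_eq n with h | h
  · refine ⟨c, hoddc, ?_⟩
    rw [hν]
    rw [h]
    exact_mod_cast hsplit.symm
  · refine ⟨-c, hoddc.neg, ?_⟩
    rw [hν]
    rw [h]
    have hz : ((2:ℤ) ^ padicValNat 2 a) * c = a := by exact_mod_cast hsplit
    rw [mul_neg, hz]

def uf (n : ℤ) : ℤ := if n = 0 then 1 else if n = -1 then 0 else n + 2 ^ (ν n + 1)
def ufInv (m : ℤ) : ℤ := if m = 1 then 0 else if m = 0 then -1 else m - 2 ^ (ν m + 1)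

lemma uf_gt (n : ℤ) : n < uf n := by
  unfold uf
  split_ifs with h0 h1
  · omega
  · omega
  · have : (0:ℤ) < 2 ^ (ν n + 1) := by positivity
    omega

lemma pow_eq_one_aux {k : ℕ} {c : ℤ} (h : 2 ^ k * c = 1 ∨ 2 ^ k * c = -1) : k = 0 := by
  by_contra hk
  have h2 : (2:ℤ) ^ 1 ≤ 2 ^ k := pow_le_pow_right₀ (by norm_num) (by omega)
  have hdvd : (2:ℤ) ∣ 2 ^ k := dvd_pow_self 2 (by omega)
  rcases h with h | h
  · have : (2:ℤ) ∣ 1 := by rw [← h]; exact hdvd.mul_right c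
    omega
  · have : (2:ℤ) ∣ -1 := by rw [← h]; exact hdvd.mul_right c
    omega

lemma uf_spec {n : ℤ} (h0 : n ≠ 0) (h1 : n ≠ -1) :
    ν (uf n) = ν n ∧ uf n ≠ 0 ∧ uf n ≠ 1 := by
  obtain ⟨m, hm, hdec⟩ := exists_odd_decomp n h0
  have h2 : 2 ^ (ν n) * m = n := hdec.symm
  have hval : uf n = 2 ^ (ν n) * (m + 2) := by
    unfold uf
    rw [if_neg h0, if_neg h1, mul_add, h2]
    ring
  have hm2 : Odd (m + 2) := by
    obtain ⟨j, hj⟩ := hm; exact ⟨j + 1, by omega⟩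
  clear h2
  have hν : ν (uf n) = ν n := by rw [hval, ν_pow_mul_odd _ _ hm2]
  have hm2ne : m + 2 ≠ 0 := by
    intro hh; rw [hh, Int.odd_iff] at hm2; omega
  refine ⟨hν, ?_, ?_⟩
  · rw [hval]
    exact mul_ne_zero (by positivity) hm2ne
  · intro hh
    rw [hval] at hh
    have hk0 : ν n = 0 := pow_eq_one_aux (Or.inl hh)
    rw [hk0] at hh hdec
    simp at hh hdec
    omega

lemma ufInv_spec {m : ℤ} (h0 : m ≠ 0) (h1 : m ≠ 1) :
    ν (ufInv m) = ν m ∧ ufInv m ≠ 0 ∧ ufInv m ≠ -1 := by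
  obtain ⟨c, hc, hdec⟩ := exists_odd_decomp m h0
  have h2 : 2 ^ (ν m) * c = m := hdec.symm
  have hval : ufInv m = 2 ^ (ν m) * (c - 2) := by
    unfold ufInv
    rw [if_neg h1, if_neg h0, mul_sub, h2]
    ring
  have hc2 : Odd (c - 2) := by
    obtain ⟨j, hj⟩ := hc; exact ⟨j - 1, by omega⟩
  clear h2
  have hν : ν (ufInv m) = ν m := by rw [hval, ν_pow_mul_odd _ _ hc2]
  have hc2ne : c - 2 ≠ 0 := by
    intro hh; rw [hh, Int.odd_iff] at hc2; omega
  refine ⟨hν, ?_, ?_⟩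
  · rw [hval]
    exact mul_ne_zero (by positivity) hc2ne
  · intro hh
    rw [hval] at hh
    have hk0 : ν m = 0 := pow_eq_one_aux (Or.inr hh)
    rw [hk0] at hh hdec
    simp at hh hdec
    omega

lemma ufInv_uf (n : ℤ) : ufInv (uf n) = n := by
  by_cases h0 : n = 0
  · subst h0; simp [uf, ufInv]
  by_cases h1 : n = -1
  · subst h1; norm_num [uf, ufInv]
  obtain ⟨hν, hne0, hne1⟩ := uf_spec h0 h1
  unfold ufInv
  rw [if_neg hne1, if_neg hne0, hν]
  unfold uf
  rw [if_neg h0, if_neg h1]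
  ring

lemma uf_ufInv (m : ℤ) : uf (ufInv m) = m := by
  by_cases h1 : m = 1
  · subst h1; norm_num [uf, ufInv]
  by_cases h0 : m = 0
  · subst h0; norm_num [uf, ufInv]
  obtain ⟨hν, hne0, hne1⟩ := ufInv_spec h0 h1
  unfold uf
  rw [if_neg hne0, if_neg hne1, hν]
  unfold ufInv
  rw [if_neg h1, if_neg h0]
  ring

lemma uf_neg_pow (k : ℕ) : uf (-(2 ^ (k + 1))) = 2 ^ (k + 1) := by
  have hne0 : -((2:ℤ) ^ (k + 1)) ≠ 0 := by
    have : (0:ℤ) < 2 ^ (k+1) := by positivity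
    omega
  have h2 : (2:ℤ) ^ 1 ≤ 2 ^ (k+1) := pow_le_pow_right₀ (by norm_num) (by omega)
  have hne1 : -((2:ℤ) ^ (k + 1)) ≠ -1 := by
    intro hh
    have : (2:ℤ) ^ (k+1) = 1 := by omega
    omega
  have hν : ν (-(2 ^ (k + 1))) = k + 1 := by
    have : -((2:ℤ) ^ (k + 1)) = 2 ^ (k+1) * (-1) := by ring
    rw [this, ν_pow_mul_odd _ _ (by exact ⟨-1, by ring⟩)]
  unfold uf
  rw [if_neg hne0, if_neg hne1, hν]
  ring

/-- all orbits of σ are infinite (σ acts freely). -/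
def Free (σ : Perm Ω) : Prop := ∀ x : Ω, ∀ n : ℤ, (σ ^ n) x = x → n = 0

def cycSetoid (σ : Perm Ω) : Setoid Ω :=
  ⟨σ.SameCycle, ⟨SameCycle.refl σ, fun h => h.symm, fun h1 h2 => h1.trans h2⟩⟩

abbrev CycQuot (σ : Perm Ω) := Quotient (cycSetoid σ)

lemma zpow_succ_apply (σ : Perm Ω) (n : ℤ) (x : Ω) :
    (σ ^ (n + 1)) x = σ ((σ ^ n) x) := by
  rw [add_comm, zpow_add, zpow_one, Perm.mul_apply]

lemma zpow_zpow_apply (σ : Perm Ω) (i j : ℤ) (x : Ω) :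
    (σ ^ i) ((σ ^ j) x) = (σ ^ (i + j)) x := by
  rw [← Perm.mul_apply, ← zpow_add]

lemma free_inv {σ : Perm Ω} (h : Free σ) : Free σ⁻¹ := by
  intro x n hn
  rw [inv_zpow, ← zpow_neg] at hn
  have := h x (-n) hn
  omega

/-- model function: for a free permutation, CycQuot σ × ℤ ≃ Ω carrying the shift to σ. -/
noncomputable def modelFun (σ : Perm Ω) : CycQuot σ × ℤ → Ω := fun p => (σ ^ p.2) p.1.out

lemma modelFun_bij {σ : Perm Ω} (hσ : Free σ) : Function.Bijective (modelFun σ) := by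
  constructor
  · rintro ⟨q, m⟩ ⟨q', n⟩ h
    simp only [modelFun] at h
    have h2 : (σ ^ (-n + m)) q.out = q'.out := by
      have h' := congrArg (fun z => (σ ^ (-n : ℤ)) z) h
      simp only [zpow_zpow_apply] at h'
      simpa using h'
    have hq : q = q' := by
      rw [← q.out_eq, ← q'.out_eq]
      exact Quotient.sound ⟨-n + m, h2⟩
    subst hq
    have h3 : (σ ^ (-n + m)) ((σ ^ (0:ℤ)) q.out) = (σ ^ (0:ℤ)) q.out := by
      simpa [zpow_zpow_apply] using h2
    have := hσ _ _ (by simpa using h2)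
    have : m = n := by omega
    simp [this]
  · intro x
    obtain ⟨i, hi⟩ := Quotient.mk_out (s := cycSetoid σ) x
    exact ⟨(⟦x⟧, i), hi⟩

noncomputable def modelEquiv {σ : Perm Ω} (hσ : Free σ) : CycQuot σ × ℤ ≃ Ω :=
  Equiv.ofBijective _ (modelFun_bij hσ)

lemma modelEquiv_shift {σ : Perm Ω} (hσ : Free σ) (q : CycQuot σ) (n : ℤ) :
    σ (modelEquiv hσ (q, n)) = modelEquiv hσ (q, n + 1) := by
  simp only [modelEquiv, Equiv.ofBijective_apply, modelFun]
  rw [zpow_succ_apply]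

/-- conjugacy of free permutations with equinumerous orbit quotients. -/
lemma isConj_of_free {σ τ : Perm Ω} (hσ : Free σ) (hτ : Free τ)
    (hQ : Nonempty (CycQuot σ ≃ CycQuot τ)) : ∃ c : Perm Ω, c * σ * c⁻¹ = τ := by
  obtain ⟨E⟩ := hQ
  set c : Perm Ω := ((modelEquiv hσ).symm.trans (Equiv.prodCongr E (Equiv.refl ℤ))).trans
      (modelEquiv hτ) with hc
  have key : ∀ x, c (σ x) = τ (c x) := by
    intro x
    obtain ⟨⟨q, n⟩, rfl⟩ := (modelEquiv hσ).surjective x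
    have h1 := modelEquiv_shift hσ q n
    have hcv : ∀ m : ℤ, c (modelEquiv hσ (q, m)) = modelEquiv hτ (E q, m) := by
      intro m
      simp [hc]
    rw [h1, hcv, hcv, modelEquiv_shift hτ]
  refine ⟨c, ?_⟩
  ext x
  simp only [Perm.mul_apply]
  rw [key (c⁻¹ x)]
  simp
/-- quotient of σ⁻¹ is the quotient of σ -/
def cycQuotInv (σ : Perm Ω) : CycQuot σ⁻¹ ≃ CycQuot σ :=
  Quotient.congrRight (fun x y => Equiv.Perm.sameCycle_inv)

def IsComm (f : Perm Ω) : Prop := ∃ g h : Perm Ω, f = g⁻¹ * h⁻¹ * g * h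

/-- the key reduction: f = w⁻¹ * v with w, v free with equinumerous quotients. -/
lemma isComm_of_split {f w v : Perm Ω} (hf : f = w⁻¹ * v) (hw : Free w) (hv : Free v)
    (hQ : Nonempty (CycQuot w ≃ CycQuot v)) : IsComm f := by
  obtain ⟨c, hc⟩ := isConj_of_free hw hv hQ
  refine ⟨w, c⁻¹, ?_⟩
  rw [hf, ← hc]
  group

/-- transporting a commutator along an equivalence -/
lemma isComm_congr (e : Ω ≃ M) (f : Perm Ω) (h : IsComm (e.permCongr f)) : IsComm f := by
  obtain ⟨g, h', hgh⟩ := h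
  refine ⟨e.permCongr.symm g, e.permCongr.symm h', ?_⟩
  have He : ∀ a b : Perm M, e.permCongr.symm (a * b) = e.permCongr.symm a * e.permCongr.symm b := by
    intro a b; ext x; simp [Equiv.permCongr]
  have Hi : ∀ a : Perm M, e.permCongr.symm a⁻¹ = (e.permCongr.symm a)⁻¹ := by
    intro a
    refine eq_inv_of_mul_eq_one_left ?_
    ext x
    simp
  have := congrArg (fun z => e.permCongr.symm z) hgh
  simp only [Equiv.symm_apply_apply, He, Hi] at this
  exact this

section Height
variable (H : M → ℤ)

/-- a permutation increasing a height function is free. -/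
lemma free_of_increasing {σ : Perm M} (h : ∀ x, H x < H (σ x)) : Free σ := by
  have hsn : ∀ (k : ℕ) (x : M), 0 < k → H x < H ((σ ^ (k:ℤ)) x) := by
    intro k
    induction k with
    | zero => intro x h0; omega
    | succ m ih =>
      intro x _
      have step : (σ ^ ((m:ℤ) + 1)) x = σ ((σ ^ (m:ℤ)) x) := by
        rw [add_comm, zpow_add, zpow_one, Perm.mul_apply]
      rcases Nat.eq_zero_or_pos m with hm | hm
      · subst hm; simpa using h x
      · have h1 := ih x hm
        have h2 := h ((σ ^ (m:ℤ)) x)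
        rw [Nat.cast_succ, step]
        omega
  intro x n hn
  rcases lt_trichotomy n 0 with hneg | rfl | hpos
  · have hx : (σ ^ (-n)) x = x := by
      nth_rewrite 1 [← hn]
      rw [← Perm.mul_apply, ← zpow_add]
      simp
    have : ((-n).toNat : ℤ) = -n := Int.toNat_of_nonneg (by omega)
    have hH := hsn (-n).toNat x (by omega)
    rw [this, hx] at hH
    omega
  · rfl
  · have : ((n).toNat : ℤ) = n := Int.toNat_of_nonneg (by omega)
    have h1 := hsn n.toNat x (by omega)
    rw [this, hn] at h1
    omega

/-- crossing points of the zero cut are pairwise in distinct orbits. -/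
lemma infinite_cycQuot_of_crossings {σ : Perm M} (hinc : ∀ x, H x < H (σ x))
    {ι : ℕ → M} (hιinj : Function.Injective ι)
    (hcross : ∀ k, H (ι k) < 0 ∧ 0 ≤ H (σ (ι k))) : Infinite (CycQuot σ) := by
  -- once the height is ≥ 0 it stays ≥ 0
  have stay : ∀ (k : ℕ) (x : M), 0 < k → 0 ≤ H (σ x) → 0 ≤ H ((σ ^ (k:ℤ)) x) := by
    intro k
    induction k with
    | zero => intro x h0; omega
    | succ m ih =>
      intro x _ hx
      have step : (σ ^ ((m:ℤ) + 1)) x = σ ((σ ^ (m:ℤ)) x) := by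
        rw [add_comm, zpow_add, zpow_one, Perm.mul_apply]
      rcases Nat.eq_zero_or_pos m with hm | hm
      · subst hm; simpa using hx
      · have h1 := ih x hm hx
        have h2 := hinc ((σ ^ (m:ℤ)) x)
        rw [Nat.cast_succ, step]
        omega
  have key : Function.Injective (fun k => (⟦ι k⟧ : CycQuot σ)) := by
    intro a b hab
    by_contra hne
    have hsc : σ.SameCycle (ι a) (ι b) := Quotient.exact hab
    obtain ⟨i, hi⟩ := hsc
    have hine : i ≠ 0 := by
      intro h0; subst h0; simp at hi; exact hne (hιinj hi)
    -- wlog i > 0 by symmetry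
    have main : ∀ (x y : M), H y < 0 → 0 ≤ H (σ x) → ∀ j : ℤ, 0 < j → (σ ^ j) x = y → False := by
      intro x y hy hx j hj hjx
      have : ((j).toNat : ℤ) = j := Int.toNat_of_nonneg (by omega)
      have hH := stay j.toNat x (by omega) hx
      rw [this, hjx] at hH
      omega
    rcases lt_trichotomy i 0 with hneg | h0 | hpos
    · have hx : (σ ^ (-i)) (ι b) = ι a := by
        have h2 : (σ ^ (-i)) ((σ ^ i) (ι a)) = ι a := by
          rw [← Perm.mul_apply, ← zpow_add]; simp
        rw [hi] at h2; exact h2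
      exact main (ι b) (ι a) (hcross a).1 (hcross b).2 (-i) (by omega) hx
    · exact hine h0
    · exact main (ι a) (ι b) (hcross b).1 (hcross a).2 i hpos hi
  exact Infinite.of_injective _ key

end Height
/-- levels of a permutation with constant level displacement d = ±1 -/
lemma level_zpow {σ : Perm (Y × ℤ)} {d : ℤ} (h : ∀ p, (σ p).2 = p.2 + d) :
    ∀ (n : ℤ) (p : Y × ℤ), ((σ ^ n) p).2 = p.2 + n * d := by
  have hinv : ∀ q : Y × ℤ, (σ⁻¹ q).2 = q.2 - d := by
    intro q
    have := h (σ⁻¹ q)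
    simp only [show ∀ q, σ (σ⁻¹ q) = q from fun q => (eq_symm_apply σ).mp rfl] at this
    omega
  intro n
  induction n using Int.induction_on with
  | zero => simp
  | succ k ih =>
    intro p
    rw [zpow_succ_apply, h, ih]
    ring
  | pred k ih =>
    intro p
    have hstep : (σ ^ (-(k:ℤ) - 1)) p = σ⁻¹ ((σ ^ (-(k:ℤ))) p) := by
      have : (-(k:ℤ) - 1) = -1 + -(k:ℤ) := by ring
      rw [this, zpow_add, zpow_neg_one, Perm.mul_apply]
    rw [hstep, hinv, ih]
    ring

lemma levelQuot {σ : Perm (Y × ℤ)} {d : ℤ} (hd : d = 1 ∨ d = -1)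
    (h : ∀ p, (σ p).2 = p.2 + d) : Nonempty (CycQuot σ ≃ Y) := by
  have hzp := level_zpow h
  have hd2 : d * d = 1 := by rcases hd with rfl | rfl <;> ring
  have hdne : d ≠ 0 := by rcases hd with rfl | rfl <;> omega
  have hbij : Function.Bijective (fun y : Y => (⟦(y, 0)⟧ : CycQuot σ)) := by
    constructor
    · intro y y' hyy
      have hsc : σ.SameCycle (y, 0) (y', 0) := Quotient.exact hyy
      obtain ⟨i, hi⟩ := hsc
      have h2 := hzp i (y, 0)
      rw [hi] at h2
      simp only at h2
      have : i = 0 := by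
        rcases hd with rfl | rfl <;> omega
      subst this
      simpa using hi
    · intro q
      set p := q.out with hp
      refine ⟨((σ ^ (-p.2 * d)) p).1, ?_⟩
      have hlev : ((σ ^ (-p.2 * d)) p).2 = 0 := by
        rw [hzp]
        have : -p.2 * d * d = -p.2 * (d * d) := by ring
        rw [this, hd2]
        ring
      have hpt : (((σ ^ (-p.2 * d)) p).1, (0:ℤ)) = (σ ^ (-p.2 * d)) p := by
        rw [Prod.ext_iff]
        exact ⟨rfl, hlev.symm⟩
      show (⟦(((σ ^ (-p.2 * d)) p).1, (0:ℤ))⟧ : CycQuot σ) = q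
      rw [hpt]
      have : σ.SameCycle p ((σ ^ (-p.2 * d)) p) := ⟨-p.2 * d, rfl⟩
      calc (⟦(σ ^ (-p.2 * d)) p⟧ : CycQuot σ) = ⟦p⟧ := (Quotient.sound this).symm
        _ = q := by rw [hp, Quotient.out_eq]
  exact ⟨(Equiv.ofBijective _ hbij).symm⟩

/-- Case A: infinitely many orbits -/
theorem caseA [Infinite Ω] (f : Perm Ω) (hQ : Infinite (CycQuot f)) : IsComm f := by
  classical
  -- #Q = #Ω
  have hsurj : Function.Surjective (Quotient.mk (cycSetoid f)) := fun q => ⟨q.out, q.out_eq⟩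
  have le1 : Cardinal.mk (CycQuot f) ≤ Cardinal.mk Ω := Cardinal.mk_le_of_surjective hsurj
  have hQZ : Cardinal.mk (CycQuot f × ℤ) = Cardinal.mk (CycQuot f) := by
    rw [Cardinal.mk_prod, Cardinal.mk_int, Cardinal.lift_aleph0, Cardinal.lift_uzero]
    exact Cardinal.mul_eq_left (Cardinal.aleph0_le_mk _) (Cardinal.aleph0_le_mk _) Cardinal.aleph0_ne_zero
  have hinj2 : ∃ J : Ω → CycQuot f × ℤ, Function.Injective J := by
    refine ⟨fun x => (⟦x⟧, Classical.choose (Quotient.mk_out (s := cycSetoid f) x)), ?_⟩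
    intro x y hxy
    have h1 : (⟦x⟧ : CycQuot f) = ⟦y⟧ := congrArg Prod.fst hxy
    have h2 := congrArg Prod.snd hxy
    simp only at h1 h2
    have hx := Classical.choose_spec (Quotient.mk_out (s := cycSetoid f) x)
    have hy := Classical.choose_spec (Quotient.mk_out (s := cycSetoid f) y)
    have houts : (⟦x⟧ : CycQuot f).out = (⟦y⟧ : CycQuot f).out := congrArg Quotient.out h1
    calc x = _ := hx.symm
      _ = y := by rw [h2, houts]; exact hy
  have le2 : Cardinal.mk Ω ≤ Cardinal.mk (CycQuot f) := by
    obtain ⟨J, hJ⟩ := hinj2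
    calc Cardinal.mk Ω ≤ Cardinal.mk (CycQuot f × ℤ) := Cardinal.mk_le_of_injective hJ
      _ = _ := hQZ
  have hcard : Cardinal.mk (CycQuot f) = Cardinal.mk Ω := le_antisymm le1 le2
  -- the splitting c : Q ≃ Q × ℤ and level function
  obtain ⟨c⟩ : Nonempty (CycQuot f ≃ CycQuot f × ℤ) := Cardinal.eq.mp hQZ.symm
  set ℓ : Ω → ℤ := fun x => (c ⟦x⟧).2 with hℓ
  have hℓf : ∀ x, ℓ (f x) = ℓ x := by
    intro x
    have : (⟦f x⟧ : CycQuot f) = ⟦x⟧ := Quotient.sound ⟨-1, by simp⟩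
    simp only [hℓ, this]
  -- fibers all have cardinality #Ω
  have hfib : ∀ n : ℤ, Cardinal.mk {x : Ω // ℓ x = n} = Cardinal.mk Ω := by
    intro n
    refine le_antisymm (Cardinal.mk_subtype_le _) ?_
    rw [← hcard]
    have : Function.Injective (fun q : CycQuot f => (⟨(c.symm (q, n)).out, by
        simp only [hℓ, Quotient.out_eq, Equiv.apply_symm_apply]⟩ : {x : Ω // ℓ x = n})) := by
      intro q q' hqq
      have h1 : (c.symm (q, n)).out = (c.symm (q', n)).out := congrArg Subtype.val hqq
      have h2 : c.symm (q, n) = c.symm (q', n) := by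
        rw [← Quotient.out_eq (c.symm (q, n)), ← Quotient.out_eq (c.symm (q', n)), h1]
      have := c.symm.injective h2
      simpa using this
    exact Cardinal.mk_le_of_injective this
  set Y := {x : Ω // ℓ x = 0} with hY
  have hφ : ∀ n : ℤ, Nonempty ({x : Ω // ℓ x = n} ≃ Y) := by
    intro n
    refine Cardinal.eq.mp ?_
    rw [hfib, hY, hfib]
  set φ : ∀ n : ℤ, {x : Ω // ℓ x = n} ≃ Y := fun n => Classical.choice (hφ n) with hφdef
  -- the level-respecting equivalence
  set e : Ω ≃ Y × ℤ :=
    (Equiv.sigmaFiberEquiv ℓ).symm.trans ((Equiv.sigmaCongrRight φ).trans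
      ((Equiv.sigmaEquivProd ℤ Y).trans (Equiv.prodComm ℤ Y))) with he
  have hlev : ∀ x, (e x).2 = ℓ x := fun x => rfl
  set F : Perm (Y × ℤ) := e.permCongr f with hF
  have hFlev : ∀ p : Y × ℤ, (F p).2 = p.2 := by
    intro p
    have h1 : (e (f (e.symm p))).2 = ℓ (f (e.symm p)) := hlev _
    have h2 : ℓ (f (e.symm p)) = ℓ (e.symm p) := hℓf _
    have h3 : ℓ (e.symm p) = (e (e.symm p)).2 := (hlev _).symm
    simp only [hF, Equiv.permCongr_apply]
    rw [h1, h2, h3, Equiv.apply_symm_apply]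
  -- split F = S * (S⁻¹ F)
  set S : Perm (Y × ℤ) := Equiv.prodCongr (Equiv.refl Y) (Equiv.addRight (1:ℤ)) with hS
  have hSlev : ∀ p : Y × ℤ, (S p).2 = p.2 + 1 := fun p => rfl
  set V : Perm (Y × ℤ) := S⁻¹ * F with hV
  have hVlev : ∀ p : Y × ℤ, (V p).2 = p.2 + (-1) := by
    intro p
    have h1 : S (V p) = F p := by
      simp only [hV, Perm.mul_apply, show ∀ q, S (S⁻¹ q) = q from fun q => (eq_symm_apply S).mp rfl]
    have h2 := hSlev (V p)
    rw [h1, hFlev] at h2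
    omega
  have hSfree : Free S := free_of_increasing (fun p => p.2) (fun p => by
    show p.2 < (S p).2
    rw [hSlev]; omega)
  have hVinvfree : Free V⁻¹ := by
    refine free_of_increasing (fun p => p.2) (fun p => ?_)
    have := hVlev (V⁻¹ p)
    simp only [show ∀ q, V (V⁻¹ q) = q from fun q => (eq_symm_apply V).mp rfl] at this
    show p.2 < (V⁻¹ p).2
    omega
  have hVfree : Free V := by
    have := free_inv hVinvfree
    rwa [inv_inv] at this
  have hQS : Nonempty (CycQuot S⁻¹ ≃ Y) := by
    refine levelQuot (Or.inr rfl) ?_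
    intro p
    have := hSlev (S⁻¹ p)
    simp only [show ∀ q, S (S⁻¹ q) = q from fun q => (eq_symm_apply S).mp rfl] at this
    omega
  have hQV : Nonempty (CycQuot V ≃ Y) := levelQuot (Or.inr rfl) hVlev
  have hQQ : Nonempty (CycQuot S⁻¹ ≃ CycQuot V) := by
    obtain ⟨a⟩ := hQS; obtain ⟨b⟩ := hQV
    exact ⟨a.trans b.symm⟩
  have hsplit : F = (S⁻¹)⁻¹ * V := by
    rw [hV]; group
  have hcomm : IsComm F := isComm_of_split hsplit (free_inv hSfree) hVfree hQQ
  exact isComm_congr e f hcomm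
section CaseBCore
variable {R : Type*} [Countable R]

open Classical in
/-- Case B core: a permutation acting as the shift on ℤ and preserving R is a commutator. -/
theorem caseB_core (F : Perm (ℤ ⊕ R))
    (hF1 : ∀ n : ℤ, F (Sum.inl n) = Sum.inl (n + 1))
    (hF2 : ∀ r : R, ∃ r' : R, F (Sum.inr r) = Sum.inr r') : IsComm F := by
  obtain ⟨ι, hι⟩ := exists_injective_nat R
  set p : R → ℤ := fun r => -(2 ^ (ι r + 1)) with hp
  have hppos : ∀ r, (0:ℤ) < 2 ^ (ι r + 1) := fun r => by positivity
  have hprle : ∀ r, p r ≤ -2 := by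
    intro r
    have h2 : (2:ℤ) ^ 1 ≤ 2 ^ (ι r + 1) := pow_le_pow_right₀ (by norm_num) (by omega)
    simp only [hp]
    omega
  have hpow_inj : ∀ k k' : ℕ, ((2:ℤ) ^ (k+1)) = 2 ^ (k'+1) → k = k' := by
    intro k k' hh
    have := congrArg Int.natAbs hh
    simp only [Int.natAbs_pow] at this
    norm_num at this
    omega
  have hpinj : Function.Injective p := by
    intro r r' hh
    simp only [hp, neg_inj] at hh
    exact hι (hpow_inj _ _ hh)
  have hup : ∀ r, uf (p r) = -(p r) := by
    intro r
    simp only [hp]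
    rw [uf_neg_pow]
    ring
  -- the permutation W
  set wFun : ℤ ⊕ R → ℤ ⊕ R := fun x => match x with
    | Sum.inl n => if h : ∃ r : R, p r = n then Sum.inr h.choose else Sum.inl (uf n)
    | Sum.inr r => Sum.inl (uf (p r)) with hwFun
  set wInv : ℤ ⊕ R → ℤ ⊕ R := fun x => match x with
    | Sum.inl m => if h : ∃ r : R, uf (p r) = m then Sum.inr h.choose else Sum.inl (ufInv m)
    | Sum.inr r => Sum.inl (p r) with hwInv
  have hufinj : Function.Injective uf := by
    intro a b hh
    have := congrArg ufInv hh
    rwa [ufInv_uf, ufInv_uf] at this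
  have hli : ∀ x, wInv (wFun x) = x := by
    intro x
    match x with
    | Sum.inl n =>
      simp only [hwFun]
      split_ifs with h
      · simp only [hwInv]
        rw [h.choose_spec]
      · simp only [hwInv]
        rw [dif_neg, ufInv_uf]
        rintro ⟨r, hr⟩
        exact h ⟨r, hufinj hr⟩
    | Sum.inr r =>
      simp only [hwFun, hwInv]
      rw [dif_pos ⟨r, rfl⟩]
      congr 1
      exact hpinj (hufinj (⟨r, rfl⟩ : ∃ r' : R, uf (p r') = uf (p r)).choose_spec)
  have hri : ∀ x, wFun (wInv x) = x := by
    intro x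
    match x with
    | Sum.inl m =>
      simp only [hwInv]
      split_ifs with h
      · simp only [hwFun]
        rw [h.choose_spec]
      · have hno : ¬ ∃ r : R, p r = ufInv m := by
          rintro ⟨r, hr⟩
          exact h ⟨r, by rw [hr]; exact uf_ufInv m⟩
        simp only [hwFun]
        rw [dif_neg hno, uf_ufInv]
    | Sum.inr r =>
      simp only [hwInv, hwFun]
      rw [dif_pos ⟨r, rfl⟩]
      congr 1
      exact hpinj (⟨r, rfl⟩ : ∃ r' : R, p r' = p r).choose_spec
  set W : Perm (ℤ ⊕ R) := ⟨wFun, wInv, hli, hri⟩ with hW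
  set V : Perm (ℤ ⊕ R) := W * F with hV
  -- height function
  set HM : ℤ ⊕ R → ℤ := Sum.elim (fun n => 2 * n) (fun r => 2 * p r + 1) with hHM
  have hWapp : ∀ x, W x = wFun x := fun x => rfl
  have hWinc : ∀ x, HM x < HM (W x) := by
    intro x
    rw [hWapp]
    match x with
    | Sum.inl n =>
      simp only [hwFun]
      split_ifs with h
      · have := h.choose_spec
        simp only [hHM, Sum.elim_inl, Sum.elim_inr, this]
        omega
      · simp only [hHM, Sum.elim_inl]
        have := uf_gt n
        omega
    | Sum.inr r =>
      simp only [hwFun, hHM, Sum.elim_inl, Sum.elim_inr]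
      rw [hup]
      have := hprle r
      omega
  have hVapp : ∀ x, V x = wFun (F x) := fun x => rfl
  have hVinc : ∀ x, HM x < HM (V x) := by
    intro x
    rw [hVapp]
    match x with
    | Sum.inl n =>
      rw [hF1]
      simp only [hwFun]
      split_ifs with h
      · have := h.choose_spec
        simp only [hHM, Sum.elim_inl, Sum.elim_inr, this]
        omega
      · simp only [hHM, Sum.elim_inl]
        have := uf_gt (n + 1)
        omega
    | Sum.inr r =>
      obtain ⟨r', hr'⟩ := hF2 r
      rw [hr']
      simp only [hwFun, hHM, Sum.elim_inl, Sum.elim_inr]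
      rw [hup]
      have h1 := hprle r
      have h2 := hprle r'
      omega
  have hWfree : Free W := free_of_increasing HM hWinc
  have hVfree : Free V := free_of_increasing HM hVinc
  -- crossings for W
  have hnoins : ∀ k : ℕ, (¬ ∃ r, ι r = k) → ¬ ∃ r : R, p r = -(2 ^ (k + 1)) := by
    intro k hk
    rintro ⟨r, hr⟩
    simp only [hp, neg_inj] at hr
    exact hk ⟨r, hpow_inj _ _ hr⟩
  have hWcross : Infinite (CycQuot W) := by
    set ιW : ℕ → ℤ ⊕ R := fun k =>
      if h : ∃ r, ι r = k then Sum.inr h.choose else Sum.inl (-(2 ^ (k + 1))) with hιW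
    apply infinite_cycQuot_of_crossings HM hWinc (ι := ιW)
    · intro k k' hkk
      simp only [hιW] at hkk
      by_cases h1 : ∃ r, ι r = k <;> by_cases h2 : ∃ r, ι r = k'
      · rw [dif_pos h1, dif_pos h2] at hkk
        have e1 : h1.choose = h2.choose := by injection hkk
        rw [← h1.choose_spec, ← h2.choose_spec, e1]
      · rw [dif_pos h1, dif_neg h2] at hkk
        exact absurd hkk (by simp)
      · rw [dif_neg h1, dif_pos h2] at hkk
        exact absurd hkk (by simp)
      · rw [dif_neg h1, dif_neg h2] at hkk
        simp only [Sum.inl.injEq, neg_inj] at hkk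
        exact hpow_inj _ _ hkk
    · intro k
      simp only [hιW]
      split_ifs with h
      · have hs := h.choose_spec
        rw [hWapp]
        simp only [hwFun, hHM, Sum.elim_inr, Sum.elim_inl]
        rw [hup]
        have h1 := hprle h.choose
        constructor
        · omega
        · omega
      · rw [hWapp]
        simp only [hwFun]
        rw [dif_neg (hnoins k h)]
        simp only [hHM, Sum.elim_inl]
        rw [uf_neg_pow]
        have : (0:ℤ) < 2 ^ (k+1) := by positivity
        constructor
        · omega
        · omega
  -- crossings for V
  have hVcross : Infinite (CycQuot V) := by
    set ιV : ℕ → ℤ ⊕ R := fun k =>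
      if h : ∃ r, ι r = k then Sum.inr h.choose else Sum.inl (-(2 ^ (k + 1)) - 1) with hιV
    apply infinite_cycQuot_of_crossings HM hVinc (ι := ιV)
    · intro k k' hkk
      simp only [hιV] at hkk
      by_cases h1 : ∃ r, ι r = k <;> by_cases h2 : ∃ r, ι r = k'
      · rw [dif_pos h1, dif_pos h2] at hkk
        have e1 : h1.choose = h2.choose := by injection hkk
        rw [← h1.choose_spec, ← h2.choose_spec, e1]
      · rw [dif_pos h1, dif_neg h2] at hkk
        exact absurd hkk (by simp)
      · rw [dif_neg h1, dif_pos h2] at hkk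
        exact absurd hkk (by simp)
      · rw [dif_neg h1, dif_neg h2] at hkk
        simp only [Sum.inl.injEq] at hkk
        have hkk2 : ((2:ℤ) ^ (k+1)) = 2 ^ (k'+1) := by linarith
        exact hpow_inj _ _ hkk2
    · intro k
      simp only [hιV]
      split_ifs with h
      · have hs := h.choose_spec
        rw [hVapp]
        obtain ⟨r', hr'⟩ := hF2 h.choose
        rw [hr']
        simp only [hwFun, hHM, Sum.elim_inr, Sum.elim_inl]
        rw [hup]
        have h1 := hprle h.choose
        have h2 := hprle r'
        constructor
        · omega
        · omega
      · rw [hVapp, hF1]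
        have hsimp : -((2:ℤ) ^ (k + 1)) - 1 + 1 = -(2 ^ (k+1)) := by ring
        rw [hsimp]
        simp only [hwFun]
        rw [dif_neg (hnoins k h)]
        simp only [hHM, Sum.elim_inl]
        rw [uf_neg_pow]
        have : (0:ℤ) < 2 ^ (k+1) := by positivity
        constructor
        · omega
        · omega
  -- equinumerous quotients
  have hQ : Nonempty (CycQuot W ≃ CycQuot V) := by
    have c1 : Cardinal.mk (CycQuot W) = Cardinal.aleph0 := Cardinal.mk_eq_aleph0 _
    have c2 : Cardinal.mk (CycQuot V) = Cardinal.aleph0 := Cardinal.mk_eq_aleph0 _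
    exact Cardinal.eq.mp (c1.trans c2.symm)
  exact isComm_of_split (by rw [hV]; group) hWfree hVfree hQ

end CaseBCore

lemma exists_inj_quot (f : Perm Ω) : ∃ J : Ω → CycQuot f × ℤ, Function.Injective J := by
  classical
  refine ⟨fun x => (⟦x⟧, Classical.choose (Quotient.mk_out (s := cycSetoid f) x)), ?_⟩
  intro x y hxy
  have h1 : (⟦x⟧ : CycQuot f) = ⟦y⟧ := congrArg Prod.fst hxy
  have h2 := congrArg Prod.snd hxy
  simp only at h1 h2
  have hx := Classical.choose_spec (Quotient.mk_out (s := cycSetoid f) x)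
  have hy := Classical.choose_spec (Quotient.mk_out (s := cycSetoid f) y)
  have houts : (⟦x⟧ : CycQuot f).out = (⟦y⟧ : CycQuot f).out := congrArg Quotient.out h1
  calc x = _ := hx.symm
    _ = y := by rw [h2, houts]; exact hy

theorem caseB [Infinite Ω] (f : Perm Ω) (hQfin : Finite (CycQuot f)) : IsComm f := by
  classical
  obtain ⟨J, hJ⟩ := exists_inj_quot f
  haveI : Countable Ω := hJ.countable
  -- there is an infinite orbit
  have hext : ∃ q : CycQuot f, Infinite {x : Ω // (⟦x⟧ : CycQuot f) = q} := by
    by_contra hno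
    push_neg at hno
    haveI hfin : ∀ q : CycQuot f, Finite {x : Ω // (⟦x⟧ : CycQuot f) = q} := fun q =>
      hno q
    haveI : Finite ((q : CycQuot f) × {x : Ω // (⟦x⟧ : CycQuot f) = q}) := inferInstance
    haveI : Finite Ω :=
      Finite.of_equiv _ (Equiv.sigmaFiberEquiv (fun x : Ω => (⟦x⟧ : CycQuot f)))
    exact not_finite Ω
  obtain ⟨q₀, hq₀⟩ := hext
  set x₀ : Ω := q₀.out with hx₀
  set θ : ℤ → Ω := fun n => (f ^ n) x₀ with hθ
  have hθmem : ∀ n, (⟦θ n⟧ : CycQuot f) = q₀ := by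
    intro n
    have h1 : (⟦θ n⟧ : CycQuot f) = ⟦x₀⟧ := by
      refine Quotient.sound ⟨-n, ?_⟩
      simp only [hθ, zpow_zpow_apply]
      simp
    rw [h1, hx₀, Quotient.out_eq]
  have hθsurj : ∀ x : Ω, (⟦x⟧ : CycQuot f) = q₀ → ∃ n, θ n = x := by
    intro x hx
    have h1 : (⟦x₀⟧ : CycQuot f) = ⟦x⟧ := by rw [hx₀, Quotient.out_eq, hx]
    exact Quotient.exact h1
  have hθinj : Function.Injective θ := by
    intro m n hmn
    by_contra hne
    have hper : ∃ k : ℤ, 0 < k ∧ (f ^ k) x₀ = x₀ := by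
      have key : ∀ a b : ℤ, θ a = θ b → (f ^ (-b + a)) x₀ = x₀ := by
        intro a b hab
        have h1 := congrArg (fun z => (f ^ (-b)) z) hab
        simp only [hθ, zpow_zpow_apply] at h1
        simpa using h1
      rcases lt_trichotomy m n with h | h | h
      · refine ⟨n - m, by omega, ?_⟩
        have he : n - m = -m + n := by ring
        rw [he]
        exact key n m hmn.symm
      · exact absurd h hne
      · refine ⟨m - n, by omega, ?_⟩
        have he : m - n = -n + m := by ring
        rw [he]
        exact key m n hmn
    obtain ⟨k, hk, hkfix⟩ := hper
    have hfixmul : ∀ j : ℤ, (f ^ (k * j)) x₀ = x₀ := by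
      intro j
      induction j using Int.induction_on with
      | zero => simp
      | succ jj ih =>
        have he : k * ((jj : ℤ) + 1) = k + k * jj := by ring
        rw [he, ← zpow_zpow_apply, ih, hkfix]
      | pred jj ih =>
        have hinvfix : (f ^ (-k)) x₀ = x₀ := by
          have := congrArg (fun z => (f ^ (-k)) z) hkfix
          simp only [zpow_zpow_apply] at this
          simpa using this.symm
        have he : k * (-(jj : ℤ) - 1) = -k + k * (-jj) := by ring
        rw [he, ← zpow_zpow_apply, ih, hinvfix]
    have hmod : ∀ i : ℤ, θ i = θ (i % k) := by
      intro i
      have he : i = i % k + k * (i / k) := (Int.emod_add_mul_ediv i k).symm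
      simp only [hθ]
      conv_lhs => rw [he]
      rw [← zpow_zpow_apply, hfixmul]
    -- the orbit is finite : contradiction
    have hsurFin : ∀ x : {x : Ω // (⟦x⟧ : CycQuot f) = q₀},
        ∃ j : Fin k.toNat, θ (j : ℤ) = x.val := by
      intro x
      obtain ⟨n, hn⟩ := hθsurj x.val x.prop
      have h0 : 0 ≤ n % k := Int.emod_nonneg n (by omega)
      have h1 : n % k < k := Int.emod_lt_of_pos n hk
      refine ⟨⟨(n % k).toNat, by omega⟩, ?_⟩
      have : (((n % k).toNat : ℤ)) = n % k := Int.toNat_of_nonneg h0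
      rw [this, ← hmod, hn]
    haveI : Finite {x : Ω // (⟦x⟧ : CycQuot f) = q₀} := by
      refine Finite.of_surjective (fun j : Fin k.toNat =>
        (⟨θ (j : ℤ), hθmem _⟩ : {x : Ω // (⟦x⟧ : CycQuot f) = q₀})) ?_
      intro x
      obtain ⟨j, hj⟩ := hsurFin x
      exact ⟨j, Subtype.ext hj⟩
    exact not_finite {x : Ω // (⟦x⟧ : CycQuot f) = q₀}
  -- build the sum model
  set P : Ω → Prop := fun x => (⟦x⟧ : CycQuot f) = q₀ with hP
  set R := {x : Ω // ¬ P x} with hR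
  have hObij : Function.Bijective (fun n : ℤ => (⟨θ n, hθmem n⟩ : {x : Ω // P x})) := by
    constructor
    · intro a b hab
      exact hθinj (congrArg Subtype.val hab)
    · intro x
      obtain ⟨n, hn⟩ := hθsurj x.val x.prop
      exact ⟨n, Subtype.ext hn⟩
  set eO : ℤ ≃ {x : Ω // P x} := Equiv.ofBijective _ hObij with heO
  set e' : ℤ ⊕ R ≃ Ω := (Equiv.sumCongr eO (Equiv.refl R)).trans (Equiv.sumCompl P) with he'
  set F : Perm (ℤ ⊕ R) := e'.symm.permCongr f with hF
  have hF1 : ∀ n : ℤ, F (Sum.inl n) = Sum.inl (n + 1) := by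
    intro n
    have h1 : e' (Sum.inl n) = θ n := rfl
    have h3 : e' (Sum.inl (n + 1)) = θ (n + 1) := rfl
    have h2 : f (θ n) = θ (n + 1) := (zpow_succ_apply f n x₀).symm
    have hcalc : F (Sum.inl n) = e'.symm (f (e' (Sum.inl n))) := by
      simp only [hF, Equiv.permCongr_apply, Equiv.symm_symm]
    rw [hcalc, h1, h2, ← h3, Equiv.symm_apply_apply]
  have hF2 : ∀ r : R, ∃ r' : R, F (Sum.inr r) = Sum.inr r' := by
    intro r
    have hr : ¬ P (f r.val) := by
      intro hh
      apply r.prop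
      have hsame : (⟦r.val⟧ : CycQuot f) = ⟦f r.val⟧ := Quotient.sound ⟨1, by simp⟩
      simp only [hP] at hh ⊢
      rw [hsame, hh]
    refine ⟨⟨f r.val, hr⟩, ?_⟩
    have h1 : e' (Sum.inr r) = r.val := rfl
    have h3 : e' (Sum.inr ⟨f r.val, hr⟩) = f r.val := rfl
    have hcalc : F (Sum.inr r) = e'.symm (f (e' (Sum.inr r))) := by
      simp only [hF, Equiv.permCongr_apply, Equiv.symm_symm]
    rw [hcalc, h1, Equiv.symm_apply_eq]
    exact h3.symm
  exact isComm_congr e'.symm f (caseB_core F hF1 hF2)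

end OreComm

/-- Every permutation of an infinite set is a commutator. -/
theorem stmt0 {Ω : Type*} [Infinite Ω] (f : Equiv.Perm Ω) :
    ∃ g h : Equiv.Perm Ω, f = g⁻¹ * h⁻¹ * g * h := by
  rcases finite_or_infinite (OreComm.CycQuot f) with hfin | hinf
  · exact OreComm.caseB f hfin
  · exact OreComm.caseA f hinf
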